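/- Let v and w be valuations on a superring R with 𝔭_v ⊆ 𝔭_w. Then the set Λ = {v, w} has the inverse property (i.e., for every x ∈ R there exists x' ∈ R such that v(x) ≠ ∞ implies v(x·x') = 0 and w(x) ≠ ∞ implies w(x·x') = 0) if and only if A_w ⊆ A_v ∪ supp(w). -/

import Mathlib

universe u

/-- A superring: a `ZMod 2`-graded ring `R = R₀ ⊕ R₁` which is supercommutative
(`R₀` is central and every odd element squares to zero). -/
structure IsSuperring {R : Type*} [Ring R] (𝒜 : ZMod 2 → AddSubgroup R) : Prop where
  one_mem : (1 : R) ∈ 𝒜 0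
  mul_mem : ∀ {i j : ZMod 2} {x y : R}, x ∈ 𝒜 i → y ∈ 𝒜 j → x * y ∈ 𝒜 (i + j)
  decompose : ∀ x : R, ∃ x0 ∈ 𝒜 0, ∃ x1 ∈ 𝒜 1, x = x0 + x1
  unique_decomp : ∀ x0 ∈ 𝒜 0, ∀ x1 ∈ 𝒜 1, x0 + x1 = 0 → x0 = 0 ∧ x1 = 0
  even_central : ∀ x ∈ 𝒜 0, ∀ y : R, x * y = y * x
  odd_sq : ∀ x ∈ 𝒜 1, x * x = 0

/-- A (Manis) valuation on a ring `R`: a surjective map `v : R → Γ ∪ {∞}`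
(`∞ = ⊤` is absorbing and greater than every element of the totally ordered
abelian group `Γ`) with `v 0 = ∞`, `v 1 = 0`, `v (x*y) = v x + v y` and
`v (x+y) ≥ min (v x) (v y)`. -/
structure IsValuation {R : Type*} [Ring R] {Γ : Type*} [AddCommGroup Γ] [LinearOrder Γ] [IsOrderedAddMonoid Γ]
    (v : R → WithTop Γ) : Prop where
  surjective : Function.Surjective v
  map_zero : v 0 = ⊤
  map_one : v 1 = 0
  map_mul : ∀ x y : R, v (x * y) = v x + v y
  min_le_add : ∀ x y : R, min (v x) (v y) ≤ v (x + y)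

/-- `A_v = {x : v x ≥ 0}`. -/
def valRing {R : Type*} [Ring R] {Γ : Type*} [AddCommGroup Γ] [LinearOrder Γ] [IsOrderedAddMonoid Γ]
    (v : R → WithTop Γ) : Set R := {x : R | 0 ≤ v x}

/-- `𝔭_v = {x : v x > 0}`. -/
def valIdeal {R : Type*} [Ring R] {Γ : Type*} [AddCommGroup Γ] [LinearOrder Γ] [IsOrderedAddMonoid Γ]
    (v : R → WithTop Γ) : Set R := {x : R | 0 < v x}

/-- `supp v = v⁻¹(∞)`. -/
def valSupp {R : Type*} [Ring R] {Γ : Type*} [AddCommGroup Γ] [LinearOrder Γ] [IsOrderedAddMonoid Γ]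
    (v : R → WithTop Γ) : Set R := {x : R | v x = ⊤}

/-- For valuations `v, w` on a superring `R` with `𝔭_v ⊆ 𝔭_w`, the set `{v, w}`
has the inverse property iff `A_w ⊆ A_v ∪ supp w`. -/
theorem inverse_property_iff {R : Type u} [Ring R] [Nontrivial R]
    (𝒜 : ZMod 2 → AddSubgroup R) (hR : IsSuperring 𝒜)
    {Γ : Type*} [AddCommGroup Γ] [LinearOrder Γ] [IsOrderedAddMonoid Γ] {Δ : Type*} [AddCommGroup Δ] [LinearOrder Δ] [IsOrderedAddMonoid Δ]
    (v : R → WithTop Γ) (hv : IsValuation v)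
    (w : R → WithTop Δ) (hw : IsValuation w)
    (hpp : valIdeal v ⊆ valIdeal w) :
    (∀ x : R, ∃ x' : R, (v x ≠ ⊤ → v (x * x') = 0) ∧ (w x ≠ ⊤ → w (x * x') = 0)) ↔
      valRing w ⊆ valRing v ∪ valSupp w := by
  constructor
  · -- inverse property → A_w ⊆ A_v ∪ supp w
    intro hinv x hx
    by_cases hwx : w x = ⊤
    · exact Or.inr hwx
    · left
      by_cases hvx : v x = ⊤
      · show (0 : WithTop Γ) ≤ v x
        rw [hvx]; exact le_top
      · obtain ⟨x', h1, h2⟩ := hinv x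
        have hv0 : v x + v x' = 0 := by rw [← hv.map_mul]; exact h1 hvx
        have hw0 : w x + w x' = 0 := by rw [← hw.map_mul]; exact h2 hwx
        -- show 0 ≤ v x
        show (0 : WithTop Γ) ≤ v x
        by_contra hneg
        push_neg at hneg
        have hx' : (0 : WithTop Δ) ≤ w x := hx
        -- v x < 0, so v x' > 0
        have hvx' : 0 < v x' := by
          by_contra hle
          push_neg at hle
          have h2' : v x + v x' < 0 := by
            calc v x + v x' ≤ v x + 0 := add_le_add_right hle _
            _ = v x := by rw [add_zero]
            _ < 0 := hneg
          rw [hv0] at h2'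
          exact lt_irrefl _ h2'
        have hwx' : 0 < w x' := hpp hvx'
        have hlt : (0 : WithTop Δ) < w x + w x' := by
          calc (0 : WithTop Δ) < w x' := hwx'
          _ = 0 + w x' := (zero_add _).symm
          _ ≤ w x + w x' := add_le_add_left hx' _
        rw [hw0] at hlt
        exact lt_irrefl _ hlt
  · -- A_w ⊆ A_v ∪ supp w → inverse property
    intro hsub x
    by_cases hwx : w x = ⊤
    · by_cases hvx : v x = ⊤
      · exact ⟨1, fun h => absurd hvx h, fun h => absurd hwx h⟩
      · obtain ⟨γ, hγ⟩ : ∃ γ : Γ, v x = ↑γ := by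
          cases h : v x with
          | top => exact absurd h hvx
          | coe γ => exact ⟨γ, rfl⟩
        obtain ⟨a, ha⟩ := hv.surjective ↑(-γ)
        refine ⟨a, fun _ => ?_, fun h => absurd hwx h⟩
        rw [hv.map_mul, hγ, ha, ← WithTop.coe_add, add_neg_cancel, WithTop.coe_zero]
    · obtain ⟨δ, hδ⟩ : ∃ δ : Δ, w x = ↑δ := by
        cases h : w x with
        | top => exact absurd h hwx
        | coe δ => exact ⟨δ, rfl⟩
      obtain ⟨b, hb⟩ := hw.surjective ↑(-δ)
      have hxb : w (x * b) = 0 := by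
        rw [hw.map_mul, hδ, hb, ← WithTop.coe_add, add_neg_cancel, WithTop.coe_zero]
      have hvxb : v (x * b) = 0 := by
        rcases lt_trichotomy (v (x * b)) 0 with h | h | h
        · exfalso
          have hmem : x * b ∈ valRing w := le_of_eq hxb.symm
          rcases hsub hmem with hm | hm
          · exact absurd hm (not_le_of_gt h)
          · simp only [valSupp, Set.mem_setOf_eq, hxb] at hm
            exact absurd hm (by simp)
        · exact h
        · exfalso
          have : 0 < w (x * b) := hpp h
          rw [hxb] at this
          exact lt_irrefl _ this
      exact ⟨b, fun _ => hvxb, fun _ => hxb⟩
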